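/- Let F be a finite field with q elements, and let K ≥ 3, 0 ≤ T ≤ K−3, 1 ≤ U ≤ K−1 with U ≤ T+1, and L ≥ 1. Then there exists no two-round DSA scheme with input length L that simultaneously satisfies the correctness constraint and the security constraint with collusion parameter T. (Infeasibility part of the main theorem: the optimal rate region is empty when U ≤ T+1.) -/

import Mathlib

open MeasureTheory Finset
open scoped ENNReal

/-- Two (discrete) random tuples `f` and `g` are statistically independent:
the joint law of `(f, g)` is the product of the marginal laws, expressed pointwise. -/
def IndepRV {Ω A B : Type*} [MeasurableSpace Ω] (P : Measure Ω)
    (f : Ω → A) (g : Ω → B) : Prop :=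
  ∀ (a : A) (b : B), P (f ⁻¹' {a} ∩ g ⁻¹' {b}) = P (f ⁻¹' {a}) * P (g ⁻¹' {b})

/-- A finite family of (discrete) random variables is mutually independent:
the joint law factorizes as the product of the marginals, expressed pointwise. -/
def iIndepRV {Ω ι : Type*} [Fintype ι] {A : ι → Type*} [MeasurableSpace Ω]
    (P : Measure Ω) (f : ∀ i, Ω → A i) : Prop :=
  ∀ a : ∀ i, A i, P (⋂ i, f i ⁻¹' {a i}) = ∏ i, P (f i ⁻¹' {a i})

/-- Conditional independence of two (discrete) random tuples `f` and `g` given the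
σ-algebra generated by a third (discrete) random tuple `h`, expressed pointwise:
`P(f = a, g = b | h = c) = P(f = a | h = c) * P(g = b | h = c)` for every `a`, `b`, `c`,
in a multiplied-out form that avoids division by zero. -/
def CondIndepRV {Ω A B C : Type*} [MeasurableSpace Ω] (P : Measure Ω)
    (f : Ω → A) (g : Ω → B) (h : Ω → C) : Prop :=
  ∀ (a : A) (b : B) (c : C),
    P (f ⁻¹' {a} ∩ g ⁻¹' {b} ∩ h ⁻¹' {c}) * P (h ⁻¹' {c}) =
      P (f ⁻¹' {a} ∩ h ⁻¹' {c}) * P (g ⁻¹' {b} ∩ h ⁻¹' {c})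

/-- A random variable valued in a finite type is uniformly distributed. -/
def UniformRV {Ω A : Type*} [Fintype A] [MeasurableSpace Ω] (P : Measure Ω)
    (f : Ω → A) : Prop :=
  ∀ a : A, P (f ⁻¹' {a}) = (Fintype.card A : ℝ≥0∞)⁻¹

/-- A two-round decentralized secure aggregation (DSA) scheme with `K` users,
minimum number `U` of surviving users, input length `L`, first-round message length
`LX`, and second-round message length `LY`, over the finite field `F`. -/
structure DSAScheme (F : Type) [Fintype F] (K U L LX LY : ℕ) where
  /-- The underlying probability space. -/
  Ω : Type
  /-- The σ-algebra on `Ω`. -/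
  [mΩ : MeasurableSpace Ω]
  /-- The probability measure. -/
  P : Measure Ω
  /-- `P` is a probability measure. -/
  [probP : IsProbabilityMeasure P]
  /-- The (finite) alphabet of the key random variables. -/
  Zt : Type
  /-- The key alphabet is finite. -/
  [fZt : Fintype Zt]
  /-- The input random variables `W₁, …, W_K`, valued in `F^L`. -/
  W : Fin K → Ω → (Fin L → F)
  /-- The key random variables `Z₁, …, Z_K`. -/
  Z : Fin K → Ω → Zt
  /-- The first-round (deterministic) encoders: `X_k = f_k (W_k, Z_k) ∈ F^{LX}`. -/
  f : Fin K → (Fin L → F) → Zt → (Fin LX → F)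
  /-- The second-round (deterministic) encoders, one for each surviving set `𝒰₁`:
  `Y_k^{𝒰₁} = g_{k,𝒰₁} (W_k, Z_k) ∈ F^{LY}`. -/
  g : Fin K → Finset (Fin K) → (Fin L → F) → Zt → (Fin LY → F)
  /-- Each `W_k` is a (measurable) random variable. -/
  measW : ∀ k (a : Fin L → F), MeasurableSet (W k ⁻¹' {a})
  /-- Each `Z_k` is a (measurable) random variable. -/
  measZ : ∀ k (z : Zt), MeasurableSet (Z k ⁻¹' {z})
  /-- The inputs `W₁, …, W_K` are mutually independent. -/
  indepW : iIndepRV P W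
  /-- Each input is uniformly distributed on `F^L`. -/
  unifW : ∀ k, UniformRV P (W k)
  /-- The tuple of inputs `(W₁, …, W_K)` is independent of the joint key tuple
  `(Z₁, …, Z_K)`. -/
  indepWZ : IndepRV P (fun ω (k : Fin K) => W k ω) (fun ω (k : Fin K) => Z k ω)

namespace DSAScheme

variable {F : Type} [Fintype F] [AddCommMonoid F] {K U L LX LY : ℕ}

/-- The first-round message of user `k`. -/
def X (𝓢 : DSAScheme F K U L LX LY) (k : Fin K) (ω : 𝓢.Ω) : Fin LX → F :=
  𝓢.f k (𝓢.W k ω) (𝓢.Z k ω)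

/-- The second-round message of user `k` when the first-round surviving set is `U1`. -/
def Y (𝓢 : DSAScheme F K U L LX LY) (U1 : Finset (Fin K)) (k : Fin K) (ω : 𝓢.Ω) :
    Fin LY → F :=
  𝓢.g k U1 (𝓢.W k ω) (𝓢.Z k ω)

/-- Correctness: for all surviving sets `𝒰₂ ⊆ 𝒰₁` with `|𝒰₂| ≥ U` and every user
`u ∈ 𝒰₂`, there is a deterministic decoder recovering `∑_{k ∈ 𝒰₁} W_k` almost surely
from `(X_k)_{k ∈ 𝒰₁ \ {u}}`, `(Y_k^{𝒰₁})_{k ∈ 𝒰₂ \ {u}}`, `W_u` and `Z_u`. -/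
def Correct (𝓢 : DSAScheme F K U L LX LY) : Prop :=
  ∀ U1 U2 : Finset (Fin K), U2 ⊆ U1 → U ≤ U2.card → ∀ u ∈ U2,
    ∃ d : ({k // k ∈ U1.erase u} → (Fin LX → F)) →
          ({k // k ∈ U2.erase u} → (Fin LY → F)) →
          (Fin L → F) → 𝓢.Zt → (Fin L → F),
      ∀ᵐ ω ∂𝓢.P,
        d (fun k => 𝓢.X k.1 ω) (fun k => 𝓢.Y U1 k.1 ω) (𝓢.W u ω) (𝓢.Z u ω)
          = ∑ k ∈ U1, 𝓢.W k ω

/-- Security against `T` colluding users: for every surviving set `𝒰₁` with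
`|𝒰₁| ≥ U`, every colluding set `𝒯` with `|𝒯| ≤ T` and every user `u`, the tuple
`((X_k)_{k ≠ u}, (Y_k^{𝒰₁})_{k ∈ 𝒰₁ \ {u}})` is conditionally independent of
`(W₁, …, W_K)` given `(∑_{k ∈ 𝒰₁} W_k, (W_k, Z_k)_{k ∈ 𝒯 ∪ {u}})`. -/
def Secure (𝓢 : DSAScheme F K U L LX LY) (T : ℕ) : Prop :=
  letI : MeasurableSpace 𝓢.Ω := 𝓢.mΩ
  ∀ U1 : Finset (Fin K), U ≤ U1.card →
  ∀ 𝒯 : Finset (Fin K), 𝒯.card ≤ T →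
  ∀ u : Fin K,
    CondIndepRV 𝓢.P
      (fun ω => ((fun k : {k : Fin K // k ≠ u} => 𝓢.X k.1 ω),
                 (fun k : {k // k ∈ U1.erase u} => 𝓢.Y U1 k.1 ω)))
      (fun ω (k : Fin K) => 𝓢.W k ω)
      (fun ω => (∑ k ∈ U1, 𝓢.W k ω,
                 fun k : {k // k ∈ insert u 𝒯} => (𝓢.W k.1 ω, 𝓢.Z k.1 ω)))

end DSAScheme

set_option maxHeartbeats 2000000 in
/-- **Infeasibility of decentralized secure aggregation when `U ≤ T + 1`.**
For a finite field `F` with `q` elements, `K ≥ 3`, `0 ≤ T ≤ K - 3`, `1 ≤ U ≤ K - 1`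
with `U ≤ T + 1`, and input length `L ≥ 1`, there is no two-round DSA scheme that
simultaneously satisfies the correctness constraint and the security constraint with
collusion parameter `T`: the optimal rate region is empty. -/
theorem dsa_infeasibility
    (F : Type) [Field F] [Fintype F] (q K U T L LX LY : ℕ)
    (hq : Fintype.card F = q)
    (hK : 3 ≤ K) (hT : T ≤ K - 3) (hU1 : 1 ≤ U) (hUK : U ≤ K - 1)
    (hUT : U ≤ T + 1) (hL : 1 ≤ L) :
    ¬ ∃ 𝓢 : DSAScheme F K U L LX LY, 𝓢.Correct ∧ 𝓢.Secure T := by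
  rintro ⟨𝓢, hCor, hSec⟩
  haveI := 𝓢.probP
  haveI := 𝓢.fZt
  letI : MeasurableSpace 𝓢.Ω := 𝓢.mΩ
  have hU2K : U + 2 ≤ K := by omega
  -- special users
  set u : Fin K := ⟨0, by omega⟩ with hu_def
  set a : Fin K := ⟨U, by omega⟩ with ha_def
  set b : Fin K := ⟨U + 1, by omega⟩ with hb_def
  -- surviving sets
  set U2 : Finset (Fin K) := Finset.univ.filter (fun k => (k : ℕ) < U) with hU2_def
  have hmemU2 : ∀ k : Fin K, k ∈ U2 ↔ (k : ℕ) < U := by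
    intro k; simp [hU2_def]
  have huU2 : u ∈ U2 := (hmemU2 u).2 hU1
  have haU2 : a ∉ U2 := by simp [hmemU2, ha_def]
  have hbU2 : b ∉ U2 := by simp [hmemU2, hb_def]
  have hab : a ≠ b := by simp [ha_def, hb_def, Fin.ext_iff]
  have hcardU2 : U2.card = U := by
    have h1 : U2 = (Finset.range U).attachFin (fun m hm => by
        have := Finset.mem_range.mp hm; omega) := by
      ext k
      simp [hmemU2, Finset.mem_attachFin, Finset.mem_range]
    rw [h1, Finset.card_attachFin, Finset.card_range]
  set 𝒯 : Finset (Fin K) := U2.erase u with h𝒯_def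
  have hins : insert u 𝒯 = U2 := Finset.insert_erase huU2
  have hcard𝒯 : 𝒯.card ≤ T := by
    rw [h𝒯_def, Finset.card_erase_of_mem huU2, hcardU2]; omega
  set U1' : Finset (Fin K) := insert b U2 with hU1'_def
  set U1 : Finset (Fin K) := insert a U1' with hU1_def
  have haU1' : a ∉ U1' := by
    simp [hU1'_def, Finset.mem_insert, hab, haU2]
  have hU2subU1' : U2 ⊆ U1' := Finset.subset_insert _ _
  have hU1'subU1 : U1' ⊆ U1 := Finset.subset_insert _ _
  have hcardU1 : U ≤ U1.card := by
    calc U = U2.card := hcardU2.symm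
    _ ≤ U1.card := Finset.card_le_card (hU2subU1'.trans hU1'subU1)
  -- decoder from correctness for (U1', U2, u)
  obtain ⟨d', hd'⟩ := hCor U1' U2 hU2subU1' (le_of_eq hcardU2.symm) u huU2
  -- security for (U1, 𝒯, u)
  have hsec := hSec U1 hcardU1 𝒯 hcard𝒯 u
  -- the two input profiles
  set δ : Fin L → F := fun _ => 1 with hδ_def
  have hδ : -δ ≠ 0 := by
    intro h
    have h' : δ = 0 := by rwa [neg_eq_zero] at h
    have := congrFun h' ⟨0, by omega⟩
    simp [hδ_def] at this
  set w' : Fin K → (Fin L → F) := fun k => if k = a then δ else if k = b then -δ else 0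
    with hw'_def
  have hw'U2 : ∀ k ∈ U2, w' k = 0 := by
    intro k hk
    have hk' := (hmemU2 k).1 hk
    have hka : k ≠ a := by
      intro h; rw [h] at hk'; simp [ha_def] at hk'
    have hkb : k ≠ b := by
      intro h; rw [h] at hk'; simp [hb_def] at hk'
    simp [hw'_def, hka, hkb]
  have hw'a : w' a = δ := by simp [hw'_def]
  have hw'b : w' b = -δ := by simp [hw'_def, hab.symm]
  have hw'u : w' u = 0 := hw'U2 u huU2
  -- sums
  have hsum' : ∑ k ∈ U1', w' k = -δ := by
    rw [hU1'_def, Finset.sum_insert hbU2, hw'b, Finset.sum_eq_zero hw'U2, add_zero]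
  have hsum1 : ∑ k ∈ U1, w' k = 0 := by
    rw [hU1_def, Finset.sum_insert haU1', hw'a, hsum', add_neg_cancel]
  -- a key realization with nonzero probability
  obtain ⟨z0, hz0⟩ : ∃ z0 : Fin K → 𝓢.Zt,
      𝓢.P ((fun ω (k : Fin K) => 𝓢.Z k ω) ⁻¹' {z0}) ≠ 0 := by
    by_contra h
    push_neg at h
    have hcover : (Set.univ : Set 𝓢.Ω) ⊆
        ⋃ z ∈ (Finset.univ : Finset (Fin K → 𝓢.Zt)),
          (fun ω (k : Fin K) => 𝓢.Z k ω) ⁻¹' {z} := by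
      intro ω _
      exact Set.mem_biUnion (Finset.mem_univ _) rfl
    have hle := (measure_mono hcover).trans
      (measure_biUnion_finset_le (μ := 𝓢.P) Finset.univ _)
    rw [Finset.sum_eq_zero (fun z _ => h z)] at hle
    simpa using hle
  -- any input profile has nonzero probability
  have hWv : ∀ v : Fin K → (Fin L → F),
      𝓢.P ((fun ω (k : Fin K) => 𝓢.W k ω) ⁻¹' {v}) ≠ 0 := by
    intro v
    have hset : ((fun ω (k : Fin K) => 𝓢.W k ω) ⁻¹' {v}) = ⋂ k, 𝓢.W k ⁻¹' {v k} := by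
      ext ω
      simp [funext_iff]
    rw [hset, 𝓢.indepW v]
    rw [Finset.prod_ne_zero_iff]
    intro k _
    rw [𝓢.unifW k (v k)]
    exact ENNReal.inv_ne_zero.mpr (ENNReal.natCast_ne_top _)
  have hE2 : ∀ v : Fin K → (Fin L → F),
      𝓢.P ((fun ω (k : Fin K) => 𝓢.W k ω) ⁻¹' {v} ∩
           (fun ω (k : Fin K) => 𝓢.Z k ω) ⁻¹' {z0}) ≠ 0 := by
    intro v
    rw [𝓢.indepWZ v z0]
    exact mul_ne_zero (hWv v) hz0
  -- the message/conditioning values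
  set m' : ({k : Fin K // k ≠ u} → (Fin LX → F)) ×
      ({k // k ∈ U1.erase u} → (Fin LY → F)) :=
    (fun k => 𝓢.f k.1 (w' k.1) (z0 k.1), fun k => 𝓢.g k.1 U1 (w' k.1) (z0 k.1))
    with hm'_def
  set c : (Fin L → F) × ({k // k ∈ insert u 𝒯} → (Fin L → F) × 𝓢.Zt) :=
    (0, fun k => (0, z0 k.1)) with hc_def
  -- the value of the decoder on arguments determined by (w', z0)
  set Dval : Fin L → F :=
    d' (fun k : {k // k ∈ U1'.erase u} => 𝓢.f k.1 (w' k.1) (z0 k.1))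
       (fun k : {k // k ∈ U2.erase u} => 𝓢.g k.1 U1' 0 (z0 k.1))
       0 (z0 u) with hD_def
  have hbad : 𝓢.P {ω | ¬ (d' (fun k : {k // k ∈ U1'.erase u} => 𝓢.X k.1 ω)
      (fun k : {k // k ∈ U2.erase u} => 𝓢.Y U1' k.1 ω) (𝓢.W u ω) (𝓢.Z u ω)
      = ∑ k ∈ U1', 𝓢.W k ω)} = 0 := ae_iff.mp hd'
  -- Step 1 : Dval = -δ (decode on the event W = w', Z = z0)
  have hDval : Dval = -δ := by
    have hne : ¬ ((fun ω (k : Fin K) => 𝓢.W k ω) ⁻¹' {w'} ∩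
        (fun ω (k : Fin K) => 𝓢.Z k ω) ⁻¹' {z0} ⊆
        {ω | ¬ (d' (fun k : {k // k ∈ U1'.erase u} => 𝓢.X k.1 ω)
          (fun k : {k // k ∈ U2.erase u} => 𝓢.Y U1' k.1 ω) (𝓢.W u ω) (𝓢.Z u ω)
          = ∑ k ∈ U1', 𝓢.W k ω)}) := by
      intro hsub
      exact hE2 w' (measure_mono_null hsub hbad)
    rw [Set.not_subset] at hne
    obtain ⟨ω, hωE, hωg⟩ := hne
    simp only [Set.mem_setOf_eq, not_not] at hωg
    obtain ⟨hWω, hZω⟩ := hωE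
    simp only [Set.mem_preimage, Set.mem_singleton_iff] at hWω hZω
    have hW : ∀ k, 𝓢.W k ω = w' k := fun k => congrFun hWω k
    have hZ : ∀ k, 𝓢.Z k ω = z0 k := fun k => congrFun hZω k
    have h1 : (fun k : {k // k ∈ U1'.erase u} => 𝓢.X k.1 ω)
        = (fun k : {k // k ∈ U1'.erase u} => 𝓢.f k.1 (w' k.1) (z0 k.1)) := by
      funext k
      simp [DSAScheme.X, hW k.1, hZ k.1]
    have h2 : (fun k : {k // k ∈ U2.erase u} => 𝓢.Y U1' k.1 ω)
        = (fun k : {k // k ∈ U2.erase u} => 𝓢.g k.1 U1' 0 (z0 k.1)) := by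
      funext k
      have hk0 : w' k.1 = 0 := hw'U2 k.1 (Finset.mem_of_mem_erase k.2)
      simp [DSAScheme.Y, hW k.1, hZ k.1, hk0]
    rw [h1, h2, hW u, hZ u, hw'u] at hωg
    have hsw : ∑ k ∈ U1', 𝓢.W k ω = -δ := by
      calc ∑ k ∈ U1', 𝓢.W k ω = ∑ k ∈ U1', w' k :=
        Finset.sum_congr rfl (fun k _ => hW k)
      _ = -δ := hsum'
    rw [hsw] at hωg
    exact hωg
  -- Step 2 : the security event {M = m', W = 0, C = c} is null
  have key := hsec m' (0 : Fin K → Fin L → F) c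
  have hABC : 𝓢.P ((fun ω => ((fun k : {k : Fin K // k ≠ u} => 𝓢.X k.1 ω),
        (fun k : {k // k ∈ U1.erase u} => 𝓢.Y U1 k.1 ω))) ⁻¹' {m'} ∩
      (fun ω (k : Fin K) => 𝓢.W k ω) ⁻¹' {(0 : Fin K → Fin L → F)} ∩
      (fun ω => (∑ k ∈ U1, 𝓢.W k ω,
        fun k : {k // k ∈ insert u 𝒯} => (𝓢.W k.1 ω, 𝓢.Z k.1 ω))) ⁻¹' {c}) = 0 := by
    apply measure_mono_null _ hbad
    rintro ω ⟨⟨hA, hB⟩, hC⟩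
    simp only [Set.mem_preimage, Set.mem_singleton_iff] at hA hB hC
    simp only [Set.mem_setOf_eq]
    intro heq
    have hA1 : ∀ k : {k : Fin K // k ≠ u}, 𝓢.X k.1 ω = 𝓢.f k.1 (w' k.1) (z0 k.1) :=
      fun k => congrFun (congrArg Prod.fst hA) k
    have hC2 : ∀ k : {k // k ∈ insert u 𝒯}, (𝓢.W k.1 ω, 𝓢.Z k.1 ω) = (0, z0 k.1) :=
      fun k => congrFun (congrArg Prod.snd hC) k
    have hW0 : ∀ k, 𝓢.W k ω = 0 := fun k => congrFun hB k
    have h1 : (fun k : {k // k ∈ U1'.erase u} => 𝓢.X k.1 ω)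
        = (fun k : {k // k ∈ U1'.erase u} => 𝓢.f k.1 (w' k.1) (z0 k.1)) := by
      funext k
      exact hA1 ⟨k.1, Finset.ne_of_mem_erase k.2⟩
    have h2 : (fun k : {k // k ∈ U2.erase u} => 𝓢.Y U1' k.1 ω)
        = (fun k : {k // k ∈ U2.erase u} => 𝓢.g k.1 U1' 0 (z0 k.1)) := by
      funext k
      have hkmem : k.1 ∈ insert u 𝒯 := Finset.mem_insert_of_mem k.2
      have hZk : 𝓢.Z k.1 ω = z0 k.1 := congrArg Prod.snd (hC2 ⟨k.1, hkmem⟩)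
      simp [DSAScheme.Y, hW0 k.1, hZk]
    have hZu : 𝓢.Z u ω = z0 u :=
      congrArg Prod.snd (hC2 ⟨u, Finset.mem_insert_self u 𝒯⟩)
    rw [h1, h2, hW0 u, hZu] at heq
    have hsw : ∑ k ∈ U1', 𝓢.W k ω = 0 := Finset.sum_eq_zero (fun k _ => hW0 k)
    rw [hsw, ← hD_def, hDval] at heq
    exact hδ heq
  -- Step 3 : the two marginal events are non-null
  have hMC : (fun ω (k : Fin K) => 𝓢.W k ω) ⁻¹' {w'} ∩
      (fun ω (k : Fin K) => 𝓢.Z k ω) ⁻¹' {z0} ⊆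
      (fun ω => ((fun k : {k : Fin K // k ≠ u} => 𝓢.X k.1 ω),
        (fun k : {k // k ∈ U1.erase u} => 𝓢.Y U1 k.1 ω))) ⁻¹' {m'} ∩
      (fun ω => (∑ k ∈ U1, 𝓢.W k ω,
        fun k : {k // k ∈ insert u 𝒯} => (𝓢.W k.1 ω, 𝓢.Z k.1 ω))) ⁻¹' {c} := by
    rintro ω ⟨hWω, hZω⟩
    simp only [Set.mem_preimage, Set.mem_singleton_iff] at hWω hZω
    have hW : ∀ k, 𝓢.W k ω = w' k := fun k => congrFun hWω k
    have hZ : ∀ k, 𝓢.Z k ω = z0 k := fun k => congrFun hZω k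
    constructor
    · simp only [Set.mem_preimage, Set.mem_singleton_iff, hm'_def]
      refine Prod.ext ?_ ?_
      · funext k
        simp [DSAScheme.X, hW k.1, hZ k.1]
      · funext k
        simp [DSAScheme.Y, hW k.1, hZ k.1]
    · simp only [Set.mem_preimage, Set.mem_singleton_iff, hc_def]
      refine Prod.ext ?_ ?_
      · calc ∑ k ∈ U1, 𝓢.W k ω = ∑ k ∈ U1, w' k :=
          Finset.sum_congr rfl (fun k _ => hW k)
        _ = 0 := hsum1
      · funext k
        have hkU2 : k.1 ∈ U2 := hins ▸ k.2
        simp [hW k.1, hZ k.1, hw'U2 k.1 hkU2]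
  have hWC : (fun ω (k : Fin K) => 𝓢.W k ω) ⁻¹' {(0 : Fin K → Fin L → F)} ∩
      (fun ω (k : Fin K) => 𝓢.Z k ω) ⁻¹' {z0} ⊆
      (fun ω (k : Fin K) => 𝓢.W k ω) ⁻¹' {(0 : Fin K → Fin L → F)} ∩
      (fun ω => (∑ k ∈ U1, 𝓢.W k ω,
        fun k : {k // k ∈ insert u 𝒯} => (𝓢.W k.1 ω, 𝓢.Z k.1 ω))) ⁻¹' {c} := by
    rintro ω ⟨hWω, hZω⟩
    simp only [Set.mem_preimage, Set.mem_singleton_iff] at hWω hZω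
    have hW : ∀ k, 𝓢.W k ω = 0 := fun k => congrFun hWω k
    have hZ : ∀ k, 𝓢.Z k ω = z0 k := fun k => congrFun hZω k
    refine ⟨hWω, ?_⟩
    simp only [Set.mem_preimage, Set.mem_singleton_iff, hc_def]
    refine Prod.ext ?_ ?_
    · exact Finset.sum_eq_zero (s := U1) (fun k _ => hW k)
    · funext k
      simp [hW k.1, hZ k.1]
  -- conclude
  rw [hABC, zero_mul] at key
  have h1 := hE2 w'
  have h2 := hE2 0
  refine mul_ne_zero ?_ ?_ key.symm
  · intro h0
    exact h1 (le_antisymm (h0 ▸ measure_mono hMC) zero_le)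
  · intro h0
    exact h2 (le_antisymm (h0 ▸ measure_mono hWC) zero_le)
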